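/- Let n ≥ 1 and let A be a real n × n matrix. Let C ⊆ ℝ^n be a closed convex cone (closed under addition and under multiplication by nonnegative scalars, and topologically closed) with C ∩ (−C) = {0} and with nonempty topological interior, and assume A maps C into itself. Let ρ be the supremum of |μ| over all complex eigenvalues μ of A. Then for every vector x in the interior of C and every linear functional φ : ℝ^n → ℝ with φ(y) > 0 for all y ∈ C, y ≠ 0, the sequence k ↦ (φ(A^k.mulVec x)) ^ (1 / k : ℝ) converges to ρ as k → ∞. -/

import Mathlib

open Filter Matrix
open scoped ENNReal NNReal Topology

attribute [local instance] Matrix.linftyOpNormedRing Matrix.linftyOpNormedAlgebra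

namespace GrowthAux

variable {n : ℕ}

/-- Row-sum bound gives linfty operator norm bound. -/
lemma linfty_norm_le (M : Matrix (Fin n) (Fin n) ℝ) {c : ℝ} (hc : 0 ≤ c)
    (h : ∀ i, ∑ j, |M i j| ≤ c) : ‖M‖ ≤ c := by
  rw [Matrix.linfty_opNorm_def]
  rw [← Real.coe_toNNReal c hc, NNReal.coe_le_coe]
  refine Finset.sup_le fun i _ => ?_
  rw [← NNReal.coe_le_coe, NNReal.coe_sum, Real.coe_toNNReal c hc]
  simpa [Real.norm_eq_abs] using h i

/-- The linfty norm of a complexified real matrix equals that of the matrix. -/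
lemma norm_map_ofReal (M : Matrix (Fin n) (Fin n) ℝ) :
    ‖M.map (Complex.ofReal)‖ = ‖M‖ := by
  rw [Matrix.linfty_opNorm_def, Matrix.linfty_opNorm_def]
  congr 1
  refine congrArg _ (funext fun i => ?_)
  simp [Matrix.map_apply, Complex.nnnorm_real]

end GrowthAux

set_option maxHeartbeats 1000000 in
/-- For a matrix preserving a closed strictly convex cone with nonempty interior,
any interior vector `x` and any linear functional `φ` strictly positive on the
cone satisfy `(φ (A^k x))^(1/k) → ρ`, the spectral radius of `A`. -/
theorem growth_rate_eq_spectralRadius (n : ℕ) (hn : 1 ≤ n)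
    (A : Matrix (Fin n) (Fin n) ℝ) (C : Set (Fin n → ℝ))
    (hadd : ∀ x ∈ C, ∀ y ∈ C, x + y ∈ C)
    (hsmul : ∀ t : ℝ, 0 ≤ t → ∀ x ∈ C, t • x ∈ C)
    (hclosed : IsClosed C)
    (hstrict : ∀ x ∈ C, -x ∈ C → x = 0)
    (hint : (interior C).Nonempty)
    (hmap : ∀ x ∈ C, A.mulVec x ∈ C)
    (ρ : ℝ)
    (hρ : ρ = sSup ((fun μ : ℂ => ‖μ‖) '' spectrum ℂ (A.map Complex.ofReal)))
    (x : Fin n → ℝ) (hx : x ∈ interior C)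
    (φ : (Fin n → ℝ) →ₗ[ℝ] ℝ) (hφ : ∀ y ∈ C, y ≠ 0 → 0 < φ y) :
    Filter.Tendsto (fun k : ℕ => (φ ((A ^ k).mulVec x)) ^ (1 / (k : ℝ)))
      Filter.atTop (nhds ρ) := by
  classical
  haveI : Nonempty (Fin n) := ⟨⟨0, hn⟩⟩
  set B : Matrix (Fin n) (Fin n) ℂ := A.map Complex.ofReal with hB
  -- Step 0: basic facts
  have hφcont : Continuous φ := φ.continuous_of_finiteDimensional
  have hxC : x ∈ C := interior_subset hx
  -- nonneg of φ on C
  have hφ0 : ∀ y ∈ C, 0 ≤ φ y := by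
    intro y hy
    rcases eq_or_ne y 0 with rfl | hy0
    · simp
    · exact (hφ y hy hy0).le
  -- Step 1: ∃ m > 0, ∀ z ∈ C, m * ‖z‖ ≤ φ z
  obtain ⟨m, hm, hmle⟩ : ∃ m > 0, ∀ z ∈ C, m * ‖z‖ ≤ φ z := by
    by_cases hS : (C ∩ Metric.sphere (0 : Fin n → ℝ) 1).Nonempty
    · have hcpt : IsCompact (C ∩ Metric.sphere (0 : Fin n → ℝ) 1) :=
        (isCompact_sphere 0 1).inter_left hclosed
      obtain ⟨z0, hz0, hz0min⟩ := hcpt.exists_isMinOn hS hφcont.continuousOn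
      have hz0ne : z0 ≠ 0 := by
        intro h
        have := hz0.2
        rw [h] at this
        simp at this
      refine ⟨φ z0, hφ z0 hz0.1 hz0ne, fun z hz => ?_⟩
      rcases eq_or_ne z 0 with rfl | hz0'
      · simp
      · have hznorm : (0 : ℝ) < ‖z‖ := norm_pos_iff.mpr hz0'
        have hz' : ‖z‖⁻¹ • z ∈ C := hsmul _ (by positivity) z hz
        have hz'sphere : ‖z‖⁻¹ • z ∈ Metric.sphere (0 : Fin n → ℝ) 1 := by
          simp [norm_smul, abs_of_pos (inv_pos.mpr hznorm), inv_mul_cancel₀ hznorm.ne']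
        have := hz0min ⟨hz', hz'sphere⟩
        have hφz' : φ z0 ≤ ‖z‖⁻¹ * φ z := by
          simpa [LinearMap.map_smul, smul_eq_mul] using this
        calc φ z0 * ‖z‖ ≤ (‖z‖⁻¹ * φ z) * ‖z‖ := by
              exact mul_le_mul_of_nonneg_right hφz' hznorm.le
          _ = φ z := by field_simp
    · refine ⟨1, one_pos, fun z hz => ?_⟩
      rcases eq_or_ne z 0 with rfl | hz0'
      · simp
      · exfalso
        apply hS
        have hznorm : (0 : ℝ) < ‖z‖ := norm_pos_iff.mpr hz0'
        refine ⟨‖z‖⁻¹ • z, hsmul _ (by positivity) z hz, ?_⟩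
        simp [norm_smul, abs_of_pos (inv_pos.mpr hznorm), inv_mul_cancel₀ hznorm.ne']
  -- Step 2: ball around x inside C
  obtain ⟨ε, hε, hball⟩ := Metric.isOpen_iff.mp isOpen_interior x hx
  set δ : ℝ := ε / 2 with hδdef
  have hδ : 0 < δ := by positivity
  have hmem : ∀ v : Fin n → ℝ, ‖v‖ ≤ δ → x + v ∈ C := by
    intro v hv
    refine interior_subset (hball ?_)
    rw [Metric.mem_ball, dist_eq_norm]
    simpa using lt_of_le_of_lt hv (by linarith)
  -- Step 3: A^k maps C into itself
  have hmapk : ∀ k : ℕ, ∀ z ∈ C, (A ^ k).mulVec z ∈ C := by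
    intro k
    induction k with
    | zero => intro z hz; simpa using hz
    | succ k ih =>
      intro z hz
      rw [pow_succ, ← Matrix.mulVec_mulVec]
      exact ih _ (hmap z hz)
  -- abbreviation
  set f : ℕ → ℝ := fun k => φ ((A ^ k).mulVec x) with hf
  have hf0 : ∀ k, 0 ≤ f k := fun k => hφ0 _ (hmapk k x hxC)
  -- Step 4: lower bound  (m*δ/n) * ‖A^k‖ ≤ f k
  set c1 : ℝ := m * δ / n with hc1def
  have hc1 : 0 < c1 := by
    have : (0:ℝ) < n := by exact_mod_cast hn
    positivity
  have hlb : ∀ k, c1 * ‖A ^ k‖ ≤ f k := by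
    intro k
    set u : Fin n → ℝ := (A ^ k).mulVec x with hu
    have hwnorm : ∀ j : Fin n, m * δ * ‖(A ^ k).mulVec (Pi.single j 1)‖ ≤ f k := by
      intro j
      set w : Fin n → ℝ := (A ^ k).mulVec (Pi.single j 1) with hw
      have hej : ‖(Pi.single j 1 : Fin n → ℝ)‖ ≤ 1 := by
        refine (pi_norm_le_iff_of_nonneg zero_le_one).mpr fun i => ?_
        rcases eq_or_ne i j with rfl | hij
        · simp
        · simp [Pi.single_eq_of_ne hij]
      have hδe : ‖δ • (Pi.single j 1 : Fin n → ℝ)‖ ≤ δ := by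
        rw [norm_smul, Real.norm_eq_abs, abs_of_pos hδ]
        nlinarith
      have hplus : x + δ • (Pi.single j 1 : Fin n → ℝ) ∈ C := hmem _ hδe
      have hminus : x + (-δ) • (Pi.single j 1 : Fin n → ℝ) ∈ C := by
        apply hmem
        rw [norm_smul, Real.norm_eq_abs, abs_neg, abs_of_pos hδ]
        nlinarith
      have ha : (A ^ k).mulVec (x + δ • (Pi.single j 1 : Fin n → ℝ)) = u + δ • w := by
        rw [Matrix.mulVec_add, Matrix.mulVec_smul]
      have hb : (A ^ k).mulVec (x + (-δ) • (Pi.single j 1 : Fin n → ℝ)) = u - δ • w := by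
        rw [Matrix.mulVec_add, Matrix.mulVec_smul]
        module
      have haC : u + δ • w ∈ C := ha ▸ hmapk k _ hplus
      have hbC : u - δ • w ∈ C := hb ▸ hmapk k _ hminus
      have h1 : m * ‖u + δ • w‖ ≤ φ (u + δ • w) := hmle _ haC
      have h2 : m * ‖u - δ • w‖ ≤ φ (u - δ • w) := hmle _ hbC
      have hsumφ : φ (u + δ • w) + φ (u - δ • w) = 2 * f k := by
        have : (u + δ • w) + (u - δ • w) = u + u := by module
        have h3 := map_add φ (u + δ • w) (u - δ • w)
        rw [this, map_add] at h3
        linarith [h3]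
      have htri : 2 * δ * ‖w‖ ≤ ‖u + δ • w‖ + ‖u - δ • w‖ := by
        have hdiff : (u + δ • w) - (u - δ • w) = (2 * δ) • w := by module
        have := norm_sub_le (u + δ • w) (u - δ • w)
        rw [hdiff, norm_smul, Real.norm_eq_abs, abs_of_pos (by linarith : (0:ℝ) < 2*δ)] at this
        linarith
      nlinarith [norm_nonneg (u + δ • w), norm_nonneg (u - δ • w), hm]
    -- row sums
    have hrow : ∀ i, ∑ j, |(A ^ k) i j| ≤ n * (f k / (m * δ)) := by
      intro i
      have : ∀ j : Fin n, |(A ^ k) i j| ≤ f k / (m * δ) := by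
        intro j
        have h1 : |(A ^ k) i j| ≤ ‖(A ^ k).mulVec (Pi.single j 1)‖ := by
          have := norm_le_pi_norm ((A ^ k).mulVec (Pi.single j 1)) i
          simpa [Matrix.mulVec_single, Real.norm_eq_abs] using this
        have h2 := hwnorm j
        rw [le_div_iff₀ (by positivity : (0:ℝ) < m * δ)]
        calc |(A ^ k) i j| * (m * δ) ≤ ‖(A ^ k).mulVec (Pi.single j 1)‖ * (m * δ) := by
              exact mul_le_mul_of_nonneg_right h1 (by positivity)
          _ ≤ f k := by nlinarith
      calc ∑ j, |(A ^ k) i j| ≤ ∑ _j : Fin n, f k / (m * δ) :=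
            Finset.sum_le_sum fun j _ => this j
        _ = n * (f k / (m * δ)) := by simp [mul_comm]
    have hnorm : ‖A ^ k‖ ≤ n * (f k / (m * δ)) :=
      GrowthAux.linfty_norm_le _ (by have := hf0 k; positivity) hrow
    have hn0 : (0:ℝ) < n := by exact_mod_cast hn
    rw [hc1def]
    calc m * δ / n * ‖A ^ k‖ ≤ m * δ / n * (n * (f k / (m * δ))) := by
          exact mul_le_mul_of_nonneg_left hnorm (div_nonneg (by positivity) hn0.le)
      _ = f k := by field_simp
  -- Step 5: upper bound
  set ψ : (Fin n → ℝ) →L[ℝ] ℝ := LinearMap.toContinuousLinearMap φ with hψ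
  set c2 : ℝ := ‖ψ‖ * ‖x‖ + 1 with hc2def
  have hc2 : 0 < c2 := by positivity
  have hub : ∀ k, f k ≤ c2 * ‖A ^ k‖ := by
    intro k
    have h1 : f k ≤ ‖ψ‖ * ‖(A ^ k).mulVec x‖ := by
      have := ψ.le_opNorm ((A ^ k).mulVec x)
      have h2 : f k ≤ ‖ψ ((A ^ k).mulVec x)‖ := le_abs_self _
      exact h2.trans this
    have h2 : ‖(A ^ k).mulVec x‖ ≤ ‖A ^ k‖ * ‖x‖ := Matrix.linfty_opNorm_mulVec _ _
    have h3 : (0:ℝ) ≤ ‖A ^ k‖ := norm_nonneg _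
    nlinarith [norm_nonneg ψ, norm_nonneg x]
  -- Step 6: Gelfand formula, spectral radius
  have hBk : ∀ k : ℕ, B ^ k = (A ^ k).map Complex.ofReal := by
    intro k
    rw [hB]
    exact (map_pow (Complex.ofRealHom.mapMatrix (m := Fin n)) A k).symm
  have hnormBk : ∀ k : ℕ, ‖B ^ k‖ = ‖A ^ k‖ := by
    intro k
    rw [hBk k]
    exact GrowthAux.norm_map_ofReal _
  -- spectral radius is finite and its toReal is ρ
  have hne : (spectrum ℂ B).Nonempty := spectrum.nonempty B
  have hcpt : IsCompact (spectrum ℂ B) := spectrum.isCompact B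
  obtain ⟨μ0, hμ0, hμ0max⟩ := hcpt.exists_isMaxOn hne (continuous_norm.continuousOn)
  have hρ0 : ρ = ‖μ0‖ := by
    rw [hρ]
    apply IsGreatest.csSup_eq
    constructor
    · exact ⟨μ0, hμ0, rfl⟩
    · rintro r ⟨μ, hμ, rfl⟩
      have := hμ0max hμ
      simpa using this
  have hsr : spectralRadius ℂ B = (‖μ0‖₊ : ℝ≥0∞) := by
    apply le_antisymm
    · refine iSup₂_le fun μ hμ => ?_
      have h := hμ0max hμ
      simp only [Set.mem_setOf_eq] at h
      exact_mod_cast h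
    · simp only [spectralRadius]
      exact le_biSup (fun μ : ℂ => (‖μ‖₊ : ℝ≥0∞)) hμ0
  have hfin : spectralRadius ℂ B ≠ ⊤ := by rw [hsr]; exact ENNReal.coe_ne_top
  have hgelf := spectrum.pow_nnnorm_pow_one_div_tendsto_nhds_spectralRadius B
  have hT : Tendsto (fun k : ℕ => ‖A ^ k‖ ^ (1 / (k:ℝ))) atTop (𝓝 ρ) := by
    have h2 := (ENNReal.tendsto_toReal hfin).comp hgelf
    have h3 : ((spectralRadius ℂ B).toReal) = ρ := by
      rw [hsr, hρ0]; simp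
    rw [h3] at h2
    convert h2 using 1
    funext k
    rw [Function.comp_apply, ← ENNReal.toReal_rpow]
    simp [hnormBk k]
  -- Step 7: squeeze
  have hone : ∀ c : ℝ, 0 < c → Tendsto (fun k : ℕ => c ^ (1 / (k:ℝ))) atTop (𝓝 1) := by
    intro c hc
    have h0 : Tendsto (fun k : ℕ => 1 / (k:ℝ)) atTop (𝓝 0) :=
      tendsto_one_div_atTop_nhds_zero_nat
    have hcc : Tendsto (fun _ : ℕ => c) atTop (𝓝 c) := tendsto_const_nhds
    have := hcc.rpow h0 (Or.inl hc.ne')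
    simpa using this
  have hlow : Tendsto (fun k : ℕ => c1 ^ (1 / (k:ℝ)) * ‖A ^ k‖ ^ (1 / (k:ℝ))) atTop (𝓝 ρ) := by
    have := (hone c1 hc1).mul hT
    simpa using this
  have hhigh : Tendsto (fun k : ℕ => c2 ^ (1 / (k:ℝ)) * ‖A ^ k‖ ^ (1 / (k:ℝ))) atTop (𝓝 ρ) := by
    have := (hone c2 hc2).mul hT
    simpa using this
  refine tendsto_of_tendsto_of_tendsto_of_le_of_le hlow hhigh ?_ ?_
  · intro k
    have hpos : (0:ℝ) ≤ 1 / (k:ℝ) := by positivity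
    calc c1 ^ (1 / (k:ℝ)) * ‖A ^ k‖ ^ (1 / (k:ℝ))
        = (c1 * ‖A ^ k‖) ^ (1 / (k:ℝ)) := (Real.mul_rpow hc1.le (norm_nonneg _)).symm
      _ ≤ (f k) ^ (1 / (k:ℝ)) := Real.rpow_le_rpow (by positivity) (hlb k) hpos
  · intro k
    have hpos : (0:ℝ) ≤ 1 / (k:ℝ) := by positivity
    calc (f k) ^ (1 / (k:ℝ)) ≤ (c2 * ‖A ^ k‖) ^ (1 / (k:ℝ)) :=
          Real.rpow_le_rpow (hf0 k) (hub k) hpos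
      _ = c2 ^ (1 / (k:ℝ)) * ‖A ^ k‖ ^ (1 / (k:ℝ)) := Real.mul_rpow hc2.le (norm_nonneg _)
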